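/- For p ∈ {3, 5} and every integer k ≥ 1, there exists a finite partially ordered set P with exactly 2·p^k + 3·p elements whose automorphism group Aut(P) is isomorphic to the cyclic group Z/p^k. -/

import Mathlib

namespace PosetAutAux

/-- The carrier of the poset: two copies of `ZMod n` (crown levels `A < B`) and three
copies of `ZMod p` (an oriented-cycle gadget `C < D < E`). -/
inductive Pt (n p : ℕ) : Type
  | A : ZMod n → Pt n p
  | B : ZMod n → Pt n p
  | C : ZMod p → Pt n p
  | D : ZMod p → Pt n p
  | E : ZMod p → Pt n p

namespace Pt

variable {n p : ℕ}

/-- The strict relations. -/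
def slt : Pt n p → Pt n p → Prop
  | A i, B j => j = i ∨ j = i + 1
  | C x, B j => (ZMod.cast j : ZMod p) = x
  | C x, D y => y = x
  | C x, E y => y = x ∨ y = x + 1
  | D x, E y => y = x
  | _, _ => False

instance : PartialOrder (Pt n p) where
  le u v := u = v ∨ slt u v
  le_refl u := Or.inl rfl
  le_trans u v w h1 h2 := by
    rcases h1 with rfl | h1
    · exact h2
    rcases h2 with rfl | h2
    · exact Or.inr h1
    · right
      cases u <;> cases v <;> cases w <;> simp_all [slt]
  le_antisymm u v h1 h2 := by
    rcases h1 with rfl | h1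
    · rfl
    rcases h2 with rfl | h2
    · rfl
    · exfalso; cases u <;> cases v <;> simp_all [slt]

lemma le_def (u v : Pt n p) : u ≤ v ↔ u = v ∨ slt u v := Iff.rfl

/-! ### Minimal / maximal elements -/

lemma isMin_A (i : ZMod n) : IsMin (A i : Pt n p) := by
  intro v hv
  rcases hv with rfl | hv
  · exact le_refl _
  · exfalso; cases v <;> simp_all [slt]

lemma isMin_C (x : ZMod p) : IsMin (C x : Pt n p) := by
  intro v hv
  rcases hv with rfl | hv
  · exact le_refl _
  · exfalso; cases v <;> simp_all [slt]

lemma isMax_B (i : ZMod n) : IsMax (B i : Pt n p) := by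
  intro v hv
  rcases hv with rfl | hv
  · exact le_refl _
  · exfalso; cases v <;> simp_all [slt]

lemma isMax_E (x : ZMod p) : IsMax (E x : Pt n p) := by
  intro v hv
  rcases hv with rfl | hv
  · exact le_refl _
  · exfalso; cases v <;> simp_all [slt]

lemma A_le_B (i j : ZMod n) (h : j = i ∨ j = i + 1) : (A i : Pt n p) ≤ B j :=
  Or.inr (by simpa [slt] using h)

lemma C_le_B (x : ZMod p) (j : ZMod n) (h : (ZMod.cast j : ZMod p) = x) :
    (C x : Pt n p) ≤ B j := Or.inr (by simpa [slt] using h)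

lemma C_le_D (x : ZMod p) : (C x : Pt n p) ≤ D x := Or.inr (by simp [slt])

lemma D_le_E (x : ZMod p) : (D x : Pt n p) ≤ E x := Or.inr (by simp [slt])

lemma C_le_E_succ (x : ZMod p) : (C x : Pt n p) ≤ E (x + 1) := Or.inr (by simp [slt])

lemma not_isMax_A (i : ZMod n) : ¬ IsMax (A i : Pt n p) := by
  intro h
  have := h (A_le_B i i (Or.inl rfl))
  rcases this with h' | h' <;> simp_all [slt]

lemma not_isMax_C (x : ZMod p) : ¬ IsMax (C x : Pt n p) := by
  intro h
  have := h (C_le_D x)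
  rcases this with h' | h' <;> simp_all [slt]

lemma not_isMax_D (x : ZMod p) : ¬ IsMax (D x : Pt n p) := by
  intro h
  have := h (D_le_E x)
  rcases this with h' | h' <;> simp_all [slt]

lemma not_isMin_B (i : ZMod n) : ¬ IsMin (B i : Pt n p) := by
  intro h
  have := h (A_le_B i i (Or.inl rfl))
  rcases this with h' | h' <;> simp_all [slt]

lemma not_isMin_D (x : ZMod p) : ¬ IsMin (D x : Pt n p) := by
  intro h
  have := h (C_le_D x)
  rcases this with h' | h' <;> simp_all [slt]

lemma not_isMin_E (x : ZMod p) : ¬ IsMin (E x : Pt n p) := by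
  intro h
  have := h (D_le_E x)
  rcases this with h' | h' <;> simp_all [slt]

/-! ### Automorphisms preserve the five classes -/

lemma mapsD (f : Pt n p ≃o Pt n p) (x : ZMod p) : ∃ y, f (D x) = D y := by
  have hmin : ¬ IsMin (f (D x)) := by
    rw [OrderIso.isMin_apply]; exact not_isMin_D x
  have hmax : ¬ IsMax (f (D x)) := by
    rw [OrderIso.isMax_apply]; exact not_isMax_D x
  cases h : f (D x) with
  | A i => exact absurd (h ▸ isMin_A i) hmin
  | B i => exact absurd (h ▸ isMax_B i) hmax
  | C y => exact absurd (h ▸ isMin_C y) hmin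
  | D y => exact ⟨y, rfl⟩
  | E y => exact absurd (h ▸ isMax_E y) hmax

lemma mapsC (f : Pt n p ≃o Pt n p) (x : ZMod p) : ∃ y, f (C x) = C y ∧ f (D x) = D y := by
  obtain ⟨y, hy⟩ := mapsD f x
  have h1 : f (C x) ≤ D y := hy ▸ f.monotone (C_le_D x)
  rcases h1 with h1 | h1
  · exfalso
    have : C x = D x := f.injective (h1.trans hy.symm)
    simp at this
  · cases hfc : f (C x) with
    | C z =>
        rw [hfc] at h1
        simp only [slt] at h1
        exact ⟨y, by rw [h1], hy⟩
    | A i => rw [hfc] at h1; simp only [slt] at h1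
    | B i => rw [hfc] at h1; simp only [slt] at h1
    | D z => rw [hfc] at h1; simp only [slt] at h1
    | E z => rw [hfc] at h1; simp only [slt] at h1

lemma mapsE (f : Pt n p ≃o Pt n p) (x : ZMod p) : ∃ y, f (E x) = E y ∧ f (D x) = D y := by
  obtain ⟨y, hy⟩ := mapsD f x
  have h1 : D y ≤ f (E x) := hy ▸ f.monotone (D_le_E x)
  rcases h1 with h1 | h1
  · exfalso
    have : D x = E x := f.injective (by rw [hy, ← h1])
    simp at this
  · cases hfe : f (E x) with
    | E z =>
        rw [hfe] at h1
        simp only [slt] at h1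
        exact ⟨y, by rw [h1], hy⟩
    | A i => rw [hfe] at h1; simp only [slt] at h1
    | B i => rw [hfe] at h1; simp only [slt] at h1
    | C z => rw [hfe] at h1; simp only [slt] at h1
    | D z => rw [hfe] at h1; simp only [slt] at h1

lemma mapsA (f : Pt n p ≃o Pt n p) (i : ZMod n) : ∃ j, f (A i) = A j := by
  have hmin : IsMin (f (A i)) := by rw [OrderIso.isMin_apply]; exact isMin_A i
  cases h : f (A i) with
  | A j => exact ⟨j, rfl⟩
  | B j => exact absurd (h ▸ hmin) (not_isMin_B j)
  | C y =>
      exfalso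
      obtain ⟨y', hy', -⟩ := mapsC f.symm y
      have : A i = C y' := by
        rw [← hy', ← h, f.symm_apply_apply]
      simp at this
  | D y => exact absurd (h ▸ hmin) (not_isMin_D y)
  | E y => exact absurd (h ▸ hmin) (not_isMin_E y)

lemma mapsB (f : Pt n p ≃o Pt n p) (i : ZMod n) : ∃ j, f (B i) = B j := by
  have hmax : IsMax (f (B i)) := by rw [OrderIso.isMax_apply]; exact isMax_B i
  cases h : f (B i) with
  | A j => exact absurd (h ▸ hmax) (not_isMax_A j)
  | B j => exact ⟨j, rfl⟩
  | C y => exact absurd (h ▸ hmax) (not_isMax_C y)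
  | D y => exact absurd (h ▸ hmax) (not_isMax_D y)
  | E y =>
      exfalso
      obtain ⟨y', hy', -⟩ := mapsE f.symm y
      have : B i = E y' := by
        rw [← hy', ← h, f.symm_apply_apply]
      simp at this

/-! ### The rotations -/

def rotFun (s : ZMod n) : Pt n p → Pt n p
  | A i => A (i + s)
  | B j => B (j + s)
  | C x => C (x + (ZMod.cast s : ZMod p))
  | D x => D (x + (ZMod.cast s : ZMod p))
  | E x => E (x + (ZMod.cast s : ZMod p))

section rot

lemma cast_add' (hdvd : p ∣ n) (a b : ZMod n) :
    (ZMod.cast (a + b) : ZMod p) = ZMod.cast a + ZMod.cast b := by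
  have := map_add (ZMod.castHom hdvd (ZMod p)) a b
  simpa [ZMod.castHom_apply] using this

lemma cast_one' (hdvd : p ∣ n) : (ZMod.cast (1 : ZMod n) : ZMod p) = 1 := by
  have := map_one (ZMod.castHom hdvd (ZMod p))
  simpa [ZMod.castHom_apply] using this

lemma rotFun_comp (hdvd : p ∣ n) (s t : ZMod n) (u : Pt n p) :
    rotFun s (rotFun t u) = rotFun (s + t) u := by
  cases u <;> simp [rotFun, cast_add' hdvd] <;> ring

lemma rotFun_zero (u : Pt n p) : rotFun (0 : ZMod n) u = u := by
  cases u <;> simp [rotFun]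

lemma rotFun_mono (hdvd : p ∣ n) (s : ZMod n) {u v : Pt n p} (h : u ≤ v) :
    rotFun s u ≤ rotFun s v := by
  rcases h with rfl | h
  · exact le_refl _
  right
  cases u <;> cases v <;> simp_all [slt, rotFun, cast_add' hdvd]
  · rcases h with rfl | rfl
    · left; rfl
    · right; ring
  · rcases h with rfl | rfl
    · left; rfl
    · right; ring

def rot (hdvd : p ∣ n) (s : ZMod n) : Pt n p ≃o Pt n p where
  toFun := rotFun s
  invFun := rotFun (-s)
  left_inv u := by rw [rotFun_comp hdvd, neg_add_cancel, rotFun_zero]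
  right_inv u := by rw [rotFun_comp hdvd, add_neg_cancel, rotFun_zero]
  map_rel_iff' := by
    intro u v
    constructor
    · intro h
      have h2 := rotFun_mono hdvd (-s) h
      change rotFun (-s) (rotFun s u) ≤ rotFun (-s) (rotFun s v) at h2
      rwa [rotFun_comp hdvd, rotFun_comp hdvd, neg_add_cancel, rotFun_zero,
        rotFun_zero] at h2
    · exact rotFun_mono hdvd s

lemma rot_apply (hdvd : p ∣ n) (s : ZMod n) (u : Pt n p) : rot hdvd s u = rotFun s u := rfl

/-- The rotations as a homomorphism. -/
def rotHom (hdvd : p ∣ n) : Multiplicative (ZMod n) →* (Pt n p ≃o Pt n p) where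
  toFun s := rot hdvd (Multiplicative.toAdd s)
  map_one' := by
    apply OrderIso.ext
    funext u
    simpa [rot_apply] using rotFun_zero u
  map_mul' s t := by
    apply OrderIso.ext
    funext u
    simp only [RelIso.coe_mul, Function.comp_apply, rot_apply]
    rw [rotFun_comp hdvd]
    simp [toAdd_mul]

lemma rotHom_injective (hdvd : p ∣ n) : Function.Injective (rotHom (n := n) (p := p) hdvd) := by
  intro s t h
  have h0 : rot hdvd (Multiplicative.toAdd s) (A 0) =
      rot hdvd (Multiplicative.toAdd t) (A 0) := by rw [show rot hdvd (Multiplicative.toAdd s) = rotHom hdvd s from rfl,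
      show rot hdvd (Multiplicative.toAdd t) = rotHom hdvd t from rfl, h]
  simp only [rot_apply, rotFun, zero_add] at h0
  have : Multiplicative.toAdd s = Multiplicative.toAdd t := by
    injection h0
  exact Multiplicative.toAdd.injective this


lemma rotHom_surjective [NeZero n] [NeZero p] (hdvd : p ∣ n)
    (hn2 : (2 : ZMod n) ≠ 0) (hn1 : (1 : ZMod n) ≠ 0)
    (hp2 : (2 : ZMod p) ≠ 0) (hp1 : (1 : ZMod p) ≠ 0) :
    Function.Surjective (rotHom (n := n) (p := p) hdvd) := by
  intro f
  choose σ hσ using fun i => mapsA f i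
  choose ρ hρ using fun i => mapsB f i
  choose τ hτC hτD using fun x => mapsC f x
  have hτE : ∀ x, f (E x) = E (τ x) := by
    intro x
    obtain ⟨y, hE, hD⟩ := mapsE f x
    have hy : y = τ x := by
      have := hD.symm.trans (hτD x)
      injection this
    rw [hE, hy]
  have σinj : Function.Injective σ := by
    intro i j h
    have h2 : f (A i) = f (A j) := by rw [hσ i, hσ j, h]
    have := f.injective h2
    injection this
  have τinj : Function.Injective τ := by
    intro x y h
    have h2 : f (D x) = f (D y) := by rw [hτD x, hτD y, h]
    have := f.injective h2
    injection this
  -- crown constraints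
  have hAB : ∀ i j : ZMod n, (j = i ∨ j = i + 1) → (ρ j = σ i ∨ ρ j = σ i + 1) := by
    intro i j hj
    have h := f.monotone (A_le_B i j hj)
    rw [hσ i, hρ j] at h
    rcases h with h | h
    · cases h
    · simpa [slt] using h
  have hρ1 : ∀ i, ρ i = σ i ∨ ρ i = σ i + 1 := fun i => hAB i i (Or.inl rfl)
  have hρ2 : ∀ i, ρ (i + 1) = σ i ∨ ρ (i + 1) = σ i + 1 := fun i => hAB i (i + 1) (Or.inr rfl)
  have hadj : ∀ i, σ (i + 1) = σ i + 1 ∨ σ (i + 1) = σ i - 1 := by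
    intro i
    have h1 := hρ1 (i + 1)
    have h2 := hρ2 i
    have hne : σ (i + 1) ≠ σ i := by
      intro h
      have h3 := σinj h
      exact hn1 (by linear_combination h3)
    rcases h1 with h1 | h1 <;> rcases h2 with h2 | h2
    · exact absurd (h1.symm.trans h2) hne
    · left; rw [← h1, h2]
    · right; linear_combination h2 - h1
    · exact absurd (by linear_combination h2 - h1) hne
  obtain ⟨ε, hε1, hε0⟩ : ∃ ε : ZMod n, σ 1 = σ 0 + ε ∧ (ε = 1 ∨ ε = -1) := by
    have h := hadj 0
    rw [zero_add] at h
    rcases h with h | h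
    · exact ⟨1, h, Or.inl rfl⟩
    · exact ⟨-1, by rw [h]; ring, Or.inr rfl⟩
  have hadjε : ∀ i, σ (i + 1) = σ i + ε ∨ σ (i + 1) = σ i - ε := by
    intro i
    rcases hε0 with rfl | rfl
    · exact hadj i
    · rcases hadj i with h | h
      · right; rw [h]; ring
      · left; rw [h]; ring
  have key : ∀ m : ℕ, σ ((m : ZMod n)) = σ 0 + ε * (m : ZMod n) ∧
      σ ((m : ZMod n) + 1) = σ 0 + ε * ((m : ZMod n) + 1) := by
    intro m
    induction m with
    | zero =>
        refine ⟨by simp, ?_⟩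
        simp only [Nat.cast_zero, zero_add, mul_one]
        exact hε1
    | succ m ih =>
        have hc : ((m + 1 : ℕ) : ZMod n) = (m : ZMod n) + 1 := by push_cast; ring
        refine ⟨by rw [hc]; exact ih.2, ?_⟩
        rw [hc]
        rcases hadjε ((m : ZMod n) + 1) with h | h
        · rw [h, ih.2]; ring
        · exfalso
          have hm : σ ((m : ZMod n) + 1 + 1) = σ ((m : ZMod n)) := by
            rw [h, ih.2, ih.1]; ring
          have h4 := σinj hm
          exact hn2 (by linear_combination h4)
  have σform : ∀ x : ZMod n, σ x = σ 0 + ε * x := by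
    intro x
    have h := (key x.val).1
    rwa [ZMod.natCast_rightInverse x] at h
  -- gadget constraints
  have hτadd : ∀ x : ZMod p, τ (x + 1) = τ x + 1 := by
    intro x
    have h := f.monotone (C_le_E_succ x)
    rw [hτC x, hτE (x + 1)] at h
    rcases h with h | h
    · cases h
    · simp only [slt] at h
      rcases h with h | h
      · exfalso
        have h3 := τinj h
        exact hp1 (by linear_combination h3)
      · exact h
  have keyτ : ∀ m : ℕ, τ ((m : ZMod p)) = τ 0 + (m : ZMod p) := by
    intro m
    induction m with
    | zero => simp
    | succ m ih =>
        have hc : ((m + 1 : ℕ) : ZMod p) = (m : ZMod p) + 1 := by push_cast; ring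
        rw [hc, hτadd, ih]; ring
  have τform : ∀ y : ZMod p, τ y = τ 0 + y := by
    intro y
    have h := keyτ y.val
    rwa [ZMod.natCast_rightInverse y] at h
  have hlink : ∀ i : ZMod n, (ZMod.cast (ρ i) : ZMod p) = τ (ZMod.cast i) := by
    intro i
    have h := f.monotone (C_le_B (ZMod.cast i) i rfl)
    rw [hτC, hρ] at h
    rcases h with h | h
    · cases h
    · simpa [slt] using h
  have c0 : (ZMod.cast (0 : ZMod n) : ZMod p) = 0 := by
    simpa [ZMod.castHom_apply] using map_zero (ZMod.castHom hdvd (ZMod p))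
  have c1 : (ZMod.cast (1 : ZMod n) : ZMod p) = 1 := cast_one' hdvd
  rcases hε0 with rfl | rfl
  · -- rotation case
    have hρσ : ∀ i, ρ i = σ i := by
      intro i
      have h1 := hρ1 i
      have h2 := hAB (i - 1) i (Or.inr (by ring))
      have hs : σ (i - 1) = σ i - 1 := by rw [σform (i - 1), σform i]; ring
      rcases h1 with h1 | h1
      · exact h1
      · exfalso
        rcases h2 with h2 | h2
        · rw [hs] at h2
          exact hn2 (by linear_combination h2 - h1)
        · rw [hs] at h2
          exact hn1 (by linear_combination h2 - h1)
    have ht : τ 0 = (ZMod.cast (σ 0) : ZMod p) := by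
      have h := hlink 0
      rw [hρσ 0, c0, τform 0, add_zero] at h
      exact h.symm
    refine ⟨Multiplicative.ofAdd (σ 0), ?_⟩
    apply OrderIso.ext
    funext u
    show rotFun (σ 0) u = f u
    cases u with
    | A i => rw [hσ i, σform i]; simp only [rotFun]; congr 1; ring
    | B i => rw [hρ i, hρσ i, σform i]; simp only [rotFun]; congr 1; ring
    | C x => rw [hτC x, τform x, ht]; simp only [rotFun]; congr 1; ring
    | D x => rw [hτD x, τform x, ht]; simp only [rotFun]; congr 1; ring
    | E x => rw [hτE x, τform x, ht]; simp only [rotFun]; congr 1; ring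
  · -- reflection case: contradiction
    exfalso
    have hρσ : ∀ i, ρ i = σ i + 1 := by
      intro i
      have h1 := hρ1 i
      have h2 := hAB (i - 1) i (Or.inr (by ring))
      have hs : σ (i - 1) = σ i + 1 := by rw [σform (i - 1), σform i]; ring
      rcases h1 with h1 | h1
      · exfalso
        rcases h2 with h2 | h2
        · rw [hs] at h2
          exact hn1 (by linear_combination h1 - h2)
        · rw [hs] at h2
          exact hn2 (by linear_combination h1 - h2)
      · exact h1
    have l0 := hlink 0
    have l1 := hlink 1
    rw [hρσ 0, c0] at l0
    rw [hρσ 1, c1, τform 1] at l1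
    have hσ1 : σ 1 + 1 = σ 0 := by rw [σform]; ring
    rw [hσ1] at l1
    rw [← l0] at l1
    rw [cast_add' hdvd, c1] at l1
    exact hp2 (by linear_combination - l1)

/-! ### Fintype and cardinality -/

def ptEquiv : Pt n p ≃ (ZMod n ⊕ ZMod n ⊕ ZMod p ⊕ ZMod p ⊕ ZMod p) where
  toFun u := match u with
    | A i => Sum.inl i
    | B i => Sum.inr (Sum.inl i)
    | C x => Sum.inr (Sum.inr (Sum.inl x))
    | D x => Sum.inr (Sum.inr (Sum.inr (Sum.inl x)))
    | E x => Sum.inr (Sum.inr (Sum.inr (Sum.inr x)))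
  invFun v := match v with
    | Sum.inl i => A i
    | Sum.inr (Sum.inl i) => B i
    | Sum.inr (Sum.inr (Sum.inl x)) => C x
    | Sum.inr (Sum.inr (Sum.inr (Sum.inl x))) => D x
    | Sum.inr (Sum.inr (Sum.inr (Sum.inr x))) => E x
  left_inv u := by cases u <;> rfl
  right_inv v := by rcases v with i | i | x | x | x <;> rfl

instance instFintypePt [NeZero n] [NeZero p] : Fintype (Pt n p) :=
  Fintype.ofEquiv _ (ptEquiv (n := n) (p := p)).symm

lemma card_pt [NeZero n] [NeZero p] : Fintype.card (Pt n p) = 2 * n + 3 * p := by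
  rw [Fintype.card_congr (ptEquiv (n := n) (p := p))]
  simp only [Fintype.card_sum, ZMod.card]
  ring

end rot

end Pt

end PosetAutAux

/-- For `p ∈ {3, 5}` and every integer `k ≥ 1`, there exists a finite poset `P` with
exactly `2 * p ^ k + 3 * p` elements whose automorphism group is isomorphic to the cyclic
group `ℤ/p^k`. -/
theorem exists_poset_aut_iso_zmod_prime_pow_three_five (p k : ℕ) (hp : p = 3 ∨ p = 5)
    (hk : 1 ≤ k) :
    ∃ (P : Type) (_ : PartialOrder P) (_ : Fintype P),
      Fintype.card P = 2 * p ^ k + 3 * p ∧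
      Nonempty ((P ≃o P) ≃* Multiplicative (ZMod (p ^ k))) := by
  classical
  have hp3 : 3 ≤ p := by rcases hp with rfl | rfl <;> norm_num
  have hpn : p ≤ p ^ k := by
    calc p = p ^ 1 := (pow_one p).symm
    _ ≤ p ^ k := Nat.pow_le_pow_right (by omega) hk
  have hn3 : 3 ≤ p ^ k := le_trans hp3 hpn
  haveI : NeZero (p ^ k) := ⟨by omega⟩
  haveI : NeZero p := ⟨by omega⟩
  have hdvd : p ∣ p ^ k := dvd_pow_self p (by omega : k ≠ 0)
  have hcast : ∀ (m a : ℕ), 3 ≤ m → a ≠ 0 → a < 3 → ((a : ZMod m) ≠ 0) := by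
    intro m a hm ha ha3 h
    rw [ZMod.natCast_eq_zero_iff] at h
    have := Nat.le_of_dvd (by omega) h
    omega
  have hn2 : (2 : ZMod (p ^ k)) ≠ 0 := by
    have := hcast (p ^ k) 2 hn3 (by norm_num) (by norm_num)
    simpa using this
  have hn1 : (1 : ZMod (p ^ k)) ≠ 0 := by
    have := hcast (p ^ k) 1 hn3 (by norm_num) (by norm_num)
    simpa using this
  have hp2 : (2 : ZMod p) ≠ 0 := by
    have := hcast p 2 hp3 (by norm_num) (by norm_num)
    simpa using this
  have hp1 : (1 : ZMod p) ≠ 0 := by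
    have := hcast p 1 hp3 (by norm_num) (by norm_num)
    simpa using this
  refine ⟨PosetAutAux.Pt (p ^ k) p, inferInstance, PosetAutAux.Pt.instFintypePt, ?_, ⟨?_⟩⟩
  · exact PosetAutAux.Pt.card_pt
  · exact (MulEquiv.ofBijective (PosetAutAux.Pt.rotHom hdvd)
      ⟨PosetAutAux.Pt.rotHom_injective hdvd,
       PosetAutAux.Pt.rotHom_surjective hdvd hn2 hn1 hp2 hp1⟩).symm
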